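/- arXiv:1805.03412 — 2 statements merged into one kernel-verified Lean document; each statement's English description precedes it below -/
import Mathlib

section
/- Let T_n be a strongly connected arc-colored tournament of order n with Δ^{-mon}(T_n) ≤ Δ^{+mon}(T_n), and suppose that 1 ≤ i(T_n) < (n+3)/3. If 2·Δ^{-mon}(T_n) + Δ^{+mon}(T_n) ≤ (n−1−i(T_n))·(n+1−i(T_n)) / (4·(n−1+i(T_n))), then every vertex of T_n is contained in a rainbow triangle. -/
open Finset

/-- A tournament on vertex type `V`: between every two distinct vertices there is
exactly one arc, and there are no loops. -/
structure Tournament (V : Type) where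
  arc : V → V → Bool
  irrefl : ∀ v, arc v v = false
  oneArc : ∀ u v : V, u ≠ v → arc u v = !arc v u

namespace Tournament

variable {V : Type} [Fintype V]

/-- Outdegree `d⁺(v)`. -/
def outDeg (T : Tournament V) (v : V) : ℕ :=
  (univ.filter fun w => T.arc v w).card

/-- Indegree `d⁻(v)`. -/
def inDeg (T : Tournament V) (v : V) : ℕ :=
  (univ.filter fun u => T.arc u v).card

/-- `δ(v) = min{d⁺(v), d⁻(v)}`. -/
def minDeg (T : Tournament V) (v : V) : ℕ :=
  min (T.outDeg v) (T.inDeg v)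

/-- The irregularity `i(T)`: the maximum of `|d⁺(v) − d⁻(v)|` over all vertices. -/
def irreg (T : Tournament V) : ℕ :=
  univ.sup fun v => ((T.outDeg v : ℤ) - (T.inDeg v : ℤ)).natAbs

/-- Strong connectivity: every vertex can reach every other vertex by a directed path. -/
def StronglyConnected (T : Tournament V) : Prop :=
  ∀ u v : V, Relation.ReflTransGen (fun a b => T.arc a b) u v

/-- The number of in-arcs of `v` with color `c`. -/
def monoInDeg (T : Tournament V) (C : V → V → ℕ) (v : V) (c : ℕ) : ℕ :=
  (univ.filter fun u => T.arc u v ∧ C u v = c).card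

/-- The number of out-arcs of `v` with color `c`. -/
def monoOutDeg (T : Tournament V) (C : V → V → ℕ) (v : V) (c : ℕ) : ℕ :=
  (univ.filter fun w => T.arc v w ∧ C v w = c).card

/-- The maximum monochromatic indegree `Δ^{-mon}(T)`. -/
def maxMonoIn (T : Tournament V) (C : V → V → ℕ) : ℕ :=
  univ.sup fun v => (univ.image fun u => C u v).sup (T.monoInDeg C v)

/-- The maximum monochromatic outdegree `Δ^{+mon}(T)`. -/
def maxMonoOut (T : Tournament V) (C : V → V → ℕ) : ℕ :=
  univ.sup fun v => (univ.image fun w => C v w).sup (T.monoOutDeg C v)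

/-- The directed triangles through `v`, encoded as ordered pairs `(w, u)` with
arcs `v → w → u → v`.  This gives each triangle through `v` exactly once. -/
def trianglesThrough (T : Tournament V) (v : V) : Finset (V × V) :=
  univ.filter fun p => T.arc v p.1 ∧ T.arc p.1 p.2 ∧ T.arc p.2 v

/-- The rainbow triangles through `v`: all three arcs have pairwise distinct colors. -/
def rainbowTrianglesThrough (T : Tournament V) (C : V → V → ℕ) (v : V) : Finset (V × V) :=
  (T.trianglesThrough v).filter fun p =>
    C v p.1 ≠ C p.1 p.2 ∧ C p.1 p.2 ≠ C p.2 v ∧ C p.2 v ≠ C v p.1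

/-- The non-rainbow triangles through `v`: some two arcs share a color. -/
def nonRainbowTrianglesThrough (T : Tournament V) (C : V → V → ℕ) (v : V) : Finset (V × V) :=
  (T.trianglesThrough v).filter fun p =>
    ¬(C v p.1 ≠ C p.1 p.2 ∧ C p.1 p.2 ≠ C p.2 v ∧ C p.2 v ≠ C v p.1)

/-- Ordered triples `(x, y, z)` with arcs `x → y → z → x`.  Each directed triangle
is counted exactly three times (once per cyclic rotation). -/
def triangleTriples (T : Tournament V) : Finset (V × V × V) :=
  univ.filter fun p => T.arc p.1 p.2.1 ∧ T.arc p.2.1 p.2.2 ∧ T.arc p.2.2 p.1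

/-- Ordered triples representing rainbow triangles (each rainbow triangle thrice). -/
def rainbowTriples (T : Tournament V) (C : V → V → ℕ) : Finset (V × V × V) :=
  T.triangleTriples.filter fun p =>
    C p.1 p.2.1 ≠ C p.2.1 p.2.2 ∧ C p.2.1 p.2.2 ≠ C p.2.2 p.1 ∧ C p.2.2 p.1 ≠ C p.1 p.2.1

/-- Ordered triples representing non-rainbow triangles (each such triangle thrice). -/
def nonRainbowTriples (T : Tournament V) (C : V → V → ℕ) : Finset (V × V × V) :=
  T.triangleTriples.filter fun p =>
    ¬(C p.1 p.2.1 ≠ C p.2.1 p.2.2 ∧ C p.2.1 p.2.2 ≠ C p.2.2 p.1 ∧ C p.2.2 p.1 ≠ C p.1 p.2.1)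

end Tournament

section Auxiliary

open Finset

namespace Tournament

variable {V : Type} [Fintype V]

omit [Fintype V] in
lemma ne_of_arc' (T : Tournament V) {u v : V} (h : T.arc u v) : u ≠ v := by
  rintro rfl; rw [T.irrefl u] at h; exact Bool.false_ne_true h

omit [Fintype V] in
lemma not_arc_rev (T : Tournament V) {u v : V} (h : T.arc u v) : ¬ T.arc v u := by
  intro h'
  have hne : v ≠ u := T.ne_of_arc' h'
  have h2 := T.oneArc v u hne
  rw [show (T.arc u v : Bool) = true from h] at h2
  rw [h2] at h'
  exact Bool.false_ne_true h'

omit [Fintype V] in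
lemma arc_total (T : Tournament V) {u v : V} (h : u ≠ v) : T.arc u v ∨ T.arc v u := by
  by_cases h2 : T.arc v u
  · right; exact h2
  · left
    have h3 := T.oneArc u v h
    simp only [Bool.not_eq_true] at h2
    rw [h2] at h3
    simp [h3]

lemma deg_sum (T : Tournament V) (v : V) :
    T.outDeg v + T.inDeg v + 1 = Fintype.card V := by
  classical
  have h1 : (univ.filter fun w => ¬ T.arc v w) = insert v (univ.filter fun w => T.arc w v) := by
    ext w
    simp only [mem_filter, mem_univ, true_and, mem_insert]
    constructor
    · intro hw
      by_cases h : w = v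
      · exact Or.inl h
      · exact Or.inr ((T.arc_total h).resolve_right hw)
    · rintro (rfl | hw)
      · simp [T.irrefl]
      · exact T.not_arc_rev hw
  have h2 := Finset.card_filter_add_card_filter_not
      (s := (univ : Finset V)) (fun w => (T.arc v w : Prop))
  rw [h1, card_insert_of_notMem (by simp [T.irrefl v])] at h2
  simp only [card_univ] at h2
  simp only [outDeg, inDeg]
  omega

lemma internal_card (T : Tournament V) (S : Finset V) :
    2 * ((S ×ˢ S).filter fun p => T.arc p.1 p.2).card + S.card = S.card * S.card := by
  classical
  set E₁ := (S ×ˢ S).filter (fun p => (T.arc p.1 p.2 : Prop)) with hE₁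
  set E₂ := (S ×ˢ S).filter (fun p => (T.arc p.2 p.1 : Prop)) with hE₂
  have hcard : E₁.card = E₂.card := by
    refine Finset.card_nbij' (fun p => (p.2, p.1)) (fun p => (p.2, p.1)) ?_ ?_ ?_ ?_
    · rintro ⟨pa, pb⟩ hp
      simp only [mem_coe, hE₁, hE₂, mem_filter, mem_product] at hp ⊢
      exact ⟨⟨hp.1.2, hp.1.1⟩, hp.2⟩
    · rintro ⟨pa, pb⟩ hp
      simp only [mem_coe, hE₁, hE₂, mem_filter, mem_product] at hp ⊢
      exact ⟨⟨hp.1.2, hp.1.1⟩, hp.2⟩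
    · rintro ⟨pa, pb⟩ _; rfl
    · rintro ⟨pa, pb⟩ _; rfl
  have hdisj : Disjoint E₁ E₂ := by
    rw [Finset.disjoint_left]
    rintro ⟨pa, pb⟩ h1 h2
    simp only [hE₁, hE₂, mem_filter, mem_product] at h1 h2
    exact T.not_arc_rev h1.2 h2.2
  have hunion : E₁ ∪ E₂ = S.offDiag := by
    ext ⟨pa, pb⟩
    simp only [hE₁, hE₂, mem_union, mem_filter, mem_product, Finset.mem_offDiag]
    constructor
    · rintro (⟨⟨ha, hb⟩, h⟩ | ⟨⟨ha, hb⟩, h⟩)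
      · exact ⟨ha, hb, T.ne_of_arc' h⟩
      · exact ⟨ha, hb, (T.ne_of_arc' h).symm⟩
    · rintro ⟨ha, hb, hne⟩
      rcases T.arc_total hne with h | h
      · exact Or.inl ⟨⟨ha, hb⟩, h⟩
      · exact Or.inr ⟨⟨ha, hb⟩, h⟩
  have hu := Finset.card_union_of_disjoint hdisj
  rw [hunion, Finset.offDiag_card] at hu
  have hle : S.card ≤ S.card * S.card := by
    rcases Nat.eq_zero_or_pos S.card with h | h
    · simp [h]
    · exact Nat.le_mul_of_pos_left _ h
  omega

lemma internal_card' (T : Tournament V) (S : Finset V) :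
    2 * ((S ×ˢ S).filter fun p => T.arc p.2 p.1).card + S.card = S.card * S.card := by
  classical
  have hcard : ((S ×ˢ S).filter fun p => (T.arc p.2 p.1 : Prop)).card
      = ((S ×ˢ S).filter fun p => (T.arc p.1 p.2 : Prop)).card := by
    refine Finset.card_nbij' (fun p => (p.2, p.1)) (fun p => (p.2, p.1)) ?_ ?_ ?_ ?_
    · rintro ⟨pa, pb⟩ hp
      simp only [mem_coe, mem_filter, mem_product] at hp ⊢
      exact ⟨⟨hp.1.2, hp.1.1⟩, hp.2⟩
    · rintro ⟨pa, pb⟩ hp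
      simp only [mem_coe, mem_filter, mem_product] at hp ⊢
      exact ⟨⟨hp.1.2, hp.1.1⟩, hp.2⟩
    · rintro ⟨pa, pb⟩ _; rfl
    · rintro ⟨pa, pb⟩ _; rfl
  rw [hcard]
  exact T.internal_card S

lemma tri_card_out (T : Tournament V) (v : V) :
    (T.trianglesThrough v).card
      = ∑ w ∈ univ.filter (fun w => (T.arc v w : Prop)),
          (univ.filter fun u => (T.arc w u : Prop) ∧ (T.arc u v : Prop)).card := by
  classical
  rw [trianglesThrough, Finset.card_filter, ← Finset.univ_product_univ, Finset.sum_product,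
    Finset.sum_filter]
  refine Finset.sum_congr rfl fun w _ => ?_
  by_cases h : (T.arc v w : Prop)
  · rw [if_pos h, Finset.card_filter]
    refine Finset.sum_congr rfl fun u _ => ?_
    by_cases h1 : (T.arc w u : Prop) <;> by_cases h2 : (T.arc u v : Prop) <;>
      simp [h, h1, h2]
  · rw [if_neg h]
    refine (Finset.sum_eq_zero fun u _ => ?_)
    simp [h]

lemma tri_card_in (T : Tournament V) (v : V) :
    (T.trianglesThrough v).card
      = ∑ u ∈ univ.filter (fun u => (T.arc u v : Prop)),
          (univ.filter fun w => (T.arc v w : Prop) ∧ (T.arc w u : Prop)).card := by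
  classical
  rw [trianglesThrough, Finset.card_filter, ← Finset.univ_product_univ, Finset.sum_product,
    Finset.sum_comm, Finset.sum_filter]
  refine Finset.sum_congr rfl fun u _ => ?_
  by_cases h : (T.arc u v : Prop)
  · rw [if_pos h, Finset.card_filter]
    refine Finset.sum_congr rfl fun w _ => ?_
    by_cases h1 : (T.arc v w : Prop) <;> by_cases h2 : (T.arc w u : Prop) <;>
      simp [h, h1, h2]
  · rw [if_neg h]
    refine (Finset.sum_eq_zero fun w _ => ?_)
    simp [h]

/-- Exact out-side count: `2·t(v) + d⁺(v)² = 2·∑_{w ∈ N⁺(v)} d⁺(w) + d⁺(v)`. -/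
lemma out_count (T : Tournament V) (v : V) :
    2 * (T.trianglesThrough v).card + T.outDeg v * T.outDeg v
      = 2 * (∑ w ∈ univ.filter (fun w => (T.arc v w : Prop)), T.outDeg w) + T.outDeg v := by
  classical
  set S := univ.filter (fun w => (T.arc v w : Prop)) with hS
  have h1 : ∀ w ∈ S,
      (univ.filter fun u => (T.arc w u : Prop) ∧ (T.arc u v : Prop)).card
        + (univ.filter fun u => (T.arc w u : Prop) ∧ (T.arc v u : Prop)).card
      = T.outDeg w := by
    intro w hw
    rw [hS, mem_filter] at hw
    have hvw : (T.arc v w : Prop) := hw.2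
    rw [outDeg, ← Finset.card_union_of_disjoint ?_]
    · congr 1
      ext u
      simp only [mem_union, mem_filter, mem_univ, true_and]
      constructor
      · rintro (⟨h, _⟩ | ⟨h, _⟩) <;> exact h
      · intro h
        have huv : u ≠ v := by
          rintro rfl
          exact T.not_arc_rev hvw h
        rcases T.arc_total huv with h' | h'
        · exact Or.inl ⟨h, h'⟩
        · exact Or.inr ⟨h, h'⟩
    · rw [Finset.disjoint_left]
      intro u hu1 hu2
      simp only [mem_filter, mem_univ, true_and] at hu1 hu2
      exact T.not_arc_rev hu1.2 hu2.2
  have h2 : ∑ w ∈ S, (univ.filter fun u => (T.arc w u : Prop) ∧ (T.arc v u : Prop)).card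
      = ((S ×ˢ S).filter fun p => (T.arc p.1 p.2 : Prop)).card := by
    rw [Finset.card_filter, Finset.sum_product]
    refine Finset.sum_congr rfl fun w _ => ?_
    rw [Finset.card_filter, hS, Finset.sum_filter]
    refine Finset.sum_congr rfl fun u _ => ?_
    by_cases h1' : (T.arc v u : Prop) <;> by_cases h2' : (T.arc w u : Prop) <;>
      simp [h1', h2']
  have h3 := T.internal_card S
  have h4 := T.tri_card_out v
  have h5 : ∑ w ∈ S, ((univ.filter fun u => (T.arc w u : Prop) ∧ (T.arc u v : Prop)).card
      + (univ.filter fun u => (T.arc w u : Prop) ∧ (T.arc v u : Prop)).card)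
      = ∑ w ∈ S, T.outDeg w := Finset.sum_congr rfl h1
  rw [Finset.sum_add_distrib] at h5
  have hScard : T.outDeg v = S.card := rfl
  rw [← hS] at h4
  rw [hScard]
  rw [h2] at h5
  linarith

/-- Exact in-side count: `2·t(v) + d⁻(v)² = 2·∑_{u ∈ N⁻(v)} d⁻(u) + d⁻(v)`. -/
lemma in_count (T : Tournament V) (v : V) :
    2 * (T.trianglesThrough v).card + T.inDeg v * T.inDeg v
      = 2 * (∑ u ∈ univ.filter (fun u => (T.arc u v : Prop)), T.inDeg u) + T.inDeg v := by
  classical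
  set S := univ.filter (fun u => (T.arc u v : Prop)) with hS
  have h1 : ∀ u ∈ S,
      (univ.filter fun w => (T.arc v w : Prop) ∧ (T.arc w u : Prop)).card
        + (univ.filter fun w => (T.arc w v : Prop) ∧ (T.arc w u : Prop)).card
      = T.inDeg u := by
    intro u hu
    rw [hS, mem_filter] at hu
    have huv : (T.arc u v : Prop) := hu.2
    rw [inDeg, ← Finset.card_union_of_disjoint ?_]
    · congr 1
      ext w
      simp only [mem_union, mem_filter, mem_univ, true_and]
      constructor
      · rintro (⟨_, h⟩ | ⟨_, h⟩) <;> exact h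
      · intro h
        have hwv : w ≠ v := by
          rintro rfl
          exact T.not_arc_rev huv h
        rcases T.arc_total hwv.symm with h' | h'
        · exact Or.inl ⟨h', h⟩
        · exact Or.inr ⟨h', h⟩
    · rw [Finset.disjoint_left]
      intro w hw1 hw2
      simp only [mem_filter, mem_univ, true_and] at hw1 hw2
      exact T.not_arc_rev hw1.1 hw2.1
  have h2 : ∑ u ∈ S, (univ.filter fun w => (T.arc w v : Prop) ∧ (T.arc w u : Prop)).card
      = ((S ×ˢ S).filter fun p => (T.arc p.2 p.1 : Prop)).card := by
    rw [Finset.card_filter, Finset.sum_product]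
    refine Finset.sum_congr rfl fun u _ => ?_
    rw [Finset.card_filter, hS, Finset.sum_filter]
    refine Finset.sum_congr rfl fun w _ => ?_
    by_cases h1' : (T.arc w v : Prop) <;> by_cases h2' : (T.arc w u : Prop) <;>
      simp [h1', h2']
  have h3 := T.internal_card' S
  have h4 := T.tri_card_in v
  have h5 : ∑ u ∈ S, ((univ.filter fun w => (T.arc v w : Prop) ∧ (T.arc w u : Prop)).card
      + (univ.filter fun w => (T.arc w v : Prop) ∧ (T.arc w u : Prop)).card)
      = ∑ u ∈ S, T.inDeg u := Finset.sum_congr rfl h1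
  rw [Finset.sum_add_distrib] at h5
  have hScard : T.inDeg v = S.card := rfl
  rw [← hS] at h4
  rw [hScard]
  rw [h2] at h5
  linarith

lemma monoOutDeg_le (T : Tournament V) (C : V → V → ℕ) (w : V) (c : ℕ) :
    T.monoOutDeg C w c ≤ T.maxMonoOut C := by
  classical
  rcases Nat.eq_zero_or_pos (T.monoOutDeg C w c) with h | h
  · rw [h]; exact Nat.zero_le _
  · rw [monoOutDeg] at h
    obtain ⟨u, hu⟩ := Finset.card_pos.mp h
    rw [mem_filter] at hu
    have hc : c ∈ univ.image fun u => C w u :=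
      Finset.mem_image.mpr ⟨u, mem_univ u, hu.2.2⟩
    calc T.monoOutDeg C w c ≤ (univ.image fun u => C w u).sup (T.monoOutDeg C w) :=
          Finset.le_sup hc
      _ ≤ T.maxMonoOut C := Finset.le_sup (f := fun v => (univ.image fun u => C v u).sup (T.monoOutDeg C v)) (mem_univ w)

lemma monoInDeg_le (T : Tournament V) (C : V → V → ℕ) (w : V) (c : ℕ) :
    T.monoInDeg C w c ≤ T.maxMonoIn C := by
  classical
  rcases Nat.eq_zero_or_pos (T.monoInDeg C w c) with h | h
  · rw [h]; exact Nat.zero_le _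
  · rw [monoInDeg] at h
    obtain ⟨u, hu⟩ := Finset.card_pos.mp h
    rw [mem_filter] at hu
    have hc : c ∈ univ.image fun u => C u w :=
      Finset.mem_image.mpr ⟨u, mem_univ u, hu.2.2⟩
    calc T.monoInDeg C w c ≤ (univ.image fun u => C u w).sup (T.monoInDeg C w) :=
          Finset.le_sup hc
      _ ≤ T.maxMonoIn C := Finset.le_sup (f := fun v => (univ.image fun u => C u v).sup (T.monoInDeg C v)) (mem_univ w)

/-- Bound on non-rainbow triangles through `v`. -/
lemma nr_bound (T : Tournament V) (C : V → V → ℕ) (v : V) :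
    (T.nonRainbowTrianglesThrough C v).card
      ≤ T.outDeg v * T.maxMonoOut C + T.inDeg v * T.maxMonoIn C
        + T.outDeg v * T.maxMonoIn C := by
  classical
  set tri := T.trianglesThrough v with htri
  set F1 := tri.filter (fun p => C v p.1 = C p.1 p.2) with hF1
  set F2 := tri.filter (fun p => C p.1 p.2 = C p.2 v) with hF2
  set F3 := tri.filter (fun p => C p.2 v = C v p.1) with hF3
  have hsub : T.nonRainbowTrianglesThrough C v ⊆ F1 ∪ (F2 ∪ F3) := by
    intro p hp
    rw [nonRainbowTrianglesThrough, mem_filter] at hp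
    rw [mem_union, mem_union, hF1, hF2, hF3, mem_filter, mem_filter, mem_filter]
    by_cases e1 : C v p.1 = C p.1 p.2
    · exact Or.inl ⟨hp.1, e1⟩
    · by_cases e2 : C p.1 p.2 = C p.2 v
      · exact Or.inr (Or.inl ⟨hp.1, e2⟩)
      · by_cases e3 : C p.2 v = C v p.1
        · exact Or.inr (Or.inr ⟨hp.1, e3⟩)
        · exact absurd ⟨e1, e2, e3⟩ hp.2
  have hle := (Finset.card_le_card hsub).trans
    ((Finset.card_union_le _ _).trans (Nat.add_le_add_left (Finset.card_union_le _ _) _))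
  have hB1 : F1.card ≤ T.outDeg v * T.maxMonoOut C := by
    have e1 : F1.card = ∑ w ∈ univ.filter (fun w => (T.arc v w : Prop)),
        (univ.filter fun u => ((T.arc w u : Prop) ∧ (T.arc u v : Prop)) ∧ C v w = C w u).card := by
      rw [hF1, htri, trianglesThrough, Finset.filter_filter, Finset.card_filter,
        ← Finset.univ_product_univ, Finset.sum_product, Finset.sum_filter]
      refine Finset.sum_congr rfl fun w _ => ?_
      by_cases h : (T.arc v w : Prop)
      · rw [if_pos h, Finset.card_filter]
        refine Finset.sum_congr rfl fun u _ => ?_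
        by_cases h1 : (T.arc w u : Prop) <;> by_cases h2 : (T.arc u v : Prop) <;>
          simp [h, h1, h2, and_assoc]
      · rw [if_neg h]
        refine (Finset.sum_eq_zero fun u _ => ?_)
        simp [h]
    rw [e1]
    calc ∑ w ∈ univ.filter (fun w => (T.arc v w : Prop)),
        (univ.filter fun u => ((T.arc w u : Prop) ∧ (T.arc u v : Prop)) ∧ C v w = C w u).card
        ≤ ∑ w ∈ univ.filter (fun w => (T.arc v w : Prop)), T.maxMonoOut C := by
          refine Finset.sum_le_sum fun w _ => ?_
          refine le_trans ?_ (T.monoOutDeg_le C w (C v w))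
          rw [monoOutDeg]
          refine Finset.card_le_card fun u hu => ?_
          rw [mem_filter] at hu ⊢
          exact ⟨hu.1, hu.2.1.1, hu.2.2.symm⟩
      _ = T.outDeg v * T.maxMonoOut C := by
          rw [Finset.sum_const, smul_eq_mul]; rfl
  have hB2 : F2.card ≤ T.inDeg v * T.maxMonoIn C := by
    have e2 : F2.card = ∑ u ∈ univ.filter (fun u => (T.arc u v : Prop)),
        (univ.filter fun w => ((T.arc v w : Prop) ∧ (T.arc w u : Prop)) ∧ C w u = C u v).card := by
      rw [hF2, htri, trianglesThrough, Finset.filter_filter, Finset.card_filter,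
        ← Finset.univ_product_univ, Finset.sum_product, Finset.sum_comm, Finset.sum_filter]
      refine Finset.sum_congr rfl fun u _ => ?_
      by_cases h : (T.arc u v : Prop)
      · rw [if_pos h, Finset.card_filter]
        refine Finset.sum_congr rfl fun w _ => ?_
        by_cases h1 : (T.arc v w : Prop) <;> by_cases h2 : (T.arc w u : Prop) <;>
          simp [h, h1, h2, and_assoc]
      · rw [if_neg h]
        refine (Finset.sum_eq_zero fun w _ => ?_)
        simp [h]
    rw [e2]
    calc ∑ u ∈ univ.filter (fun u => (T.arc u v : Prop)),
        (univ.filter fun w => ((T.arc v w : Prop) ∧ (T.arc w u : Prop)) ∧ C w u = C u v).card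
        ≤ ∑ u ∈ univ.filter (fun u => (T.arc u v : Prop)), T.maxMonoIn C := by
          refine Finset.sum_le_sum fun u _ => ?_
          refine le_trans ?_ (T.monoInDeg_le C u (C u v))
          rw [monoInDeg]
          refine Finset.card_le_card fun w hw => ?_
          rw [mem_filter] at hw ⊢
          exact ⟨hw.1, hw.2.1.2, hw.2.2⟩
      _ = T.inDeg v * T.maxMonoIn C := by
          rw [Finset.sum_const, smul_eq_mul]; rfl
  have hB3 : F3.card ≤ T.outDeg v * T.maxMonoIn C := by
    have e3 : F3.card = ∑ w ∈ univ.filter (fun w => (T.arc v w : Prop)),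
        (univ.filter fun u => ((T.arc w u : Prop) ∧ (T.arc u v : Prop)) ∧ C u v = C v w).card := by
      rw [hF3, htri, trianglesThrough, Finset.filter_filter, Finset.card_filter,
        ← Finset.univ_product_univ, Finset.sum_product, Finset.sum_filter]
      refine Finset.sum_congr rfl fun w _ => ?_
      by_cases h : (T.arc v w : Prop)
      · rw [if_pos h, Finset.card_filter]
        refine Finset.sum_congr rfl fun u _ => ?_
        by_cases h1 : (T.arc w u : Prop) <;> by_cases h2 : (T.arc u v : Prop) <;>
          simp [h, h1, h2, and_assoc]
      · rw [if_neg h]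
        refine (Finset.sum_eq_zero fun u _ => ?_)
        simp [h]
    rw [e3]
    calc ∑ w ∈ univ.filter (fun w => (T.arc v w : Prop)),
        (univ.filter fun u => ((T.arc w u : Prop) ∧ (T.arc u v : Prop)) ∧ C u v = C v w).card
        ≤ ∑ w ∈ univ.filter (fun w => (T.arc v w : Prop)), T.maxMonoIn C := by
          refine Finset.sum_le_sum fun w _ => ?_
          refine le_trans ?_ (T.monoInDeg_le C v (C v w))
          rw [monoInDeg]
          refine Finset.card_le_card fun u hu => ?_
          rw [mem_filter] at hu ⊢
          exact ⟨hu.1, hu.2.1.2, hu.2.2⟩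
      _ = T.outDeg v * T.maxMonoIn C := by
          rw [Finset.sum_const, smul_eq_mul]; rfl
  omega

end Tournament

lemma arith_key (m i x y a b t NR : ℚ)
    (hi1 : 1 ≤ i) (hi2 : 3*i < m+4) (hm : 1 ≤ m) (hxy : x + y = m)
    (hx : m - i ≤ 2*x) (hy : m - i ≤ 2*y)
    (ha : 1 ≤ a) (hab : a ≤ b)
    (hK : 4*(m+i)*(2*a+b) ≤ (m-i)*(m+2-i))
    (ht1 : x*(m+1-i-x) ≤ 2*t) (ht2 : y*(m+1-i-y) ≤ 2*t)
    (hNR : NR ≤ x*b + y*a + x*a) : NR < t := by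
  have hb : 1 ≤ b := le_trans ha hab
  set P : ℚ := (m-i)*(m+2-i) - 4*(m+i)*(2*a+b) with hP
  have hP0 : 0 ≤ P := by simp [hP]; linarith
  have hR : 0 < P + 8*i*a + 4*b*i + 2*i - i^2 := by
    have key : (m+i) * (P + 8*i*a + 4*b*i + 2*i - i^2)
        = m*P + i*(m*(m+4-3*i)) := by rw [hP]; ring
    have h1 : 0 < m*(m+4-3*i) := by nlinarith
    have h2 : 0 < (m+i) * (P + 8*i*a + 4*b*i + 2*i - i^2) := by
      rw [key]; nlinarith
    by_contra hcon
    push_neg at hcon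
    nlinarith
  rcases le_total x y with hxley | hylex
  · have hy' : y = m - x := by linarith
    subst hy'
    have hid : 4*(x*(m+1-i-x) - 2*(x*(a+b)+(m-x)*a))
        = (P + 8*i*a + 4*b*i + 2*i - i^2)
          + (i-2*((2*x-m+i)/2))*(4*b+i+2*((2*x-m+i)/2)-2) := by
      rw [hP]; ring
    have hs1 : 0 ≤ i - 2*((2*x-m+i)/2) := by linarith
    have hs2 : 0 ≤ 4*b+i+2*((2*x-m+i)/2)-2 := by linarith
    nlinarith [mul_nonneg hs1 hs2]
  · have hx' : x = m - y := by linarith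
    subst hx'
    set s : ℚ := (2*y-m+i)/2 with hs
    have hs0 : 0 ≤ s := by rw [hs]; linarith
    have hsi : 2*s ≤ i := by rw [hs]; linarith
    rcases le_total (4*b+2) (i+2*s) with hc | hc
    · have hid : 4*(y*(m+1-i-y) - 2*((m-y)*(a+b)+y*a))
          = (P + 8*i*a + 4*b*i + 2*i - i^2) + (i-2*s)*(i+2*s-4*b-2) := by
        rw [hs, hP]; ring
      nlinarith [mul_nonneg (by linarith : (0:ℚ) ≤ i - 2*s) (by linarith : (0:ℚ) ≤ i + 2*s - 4*b - 2)]
    · have hid : 4*(y*(m+1-i-y) - 2*((m-y)*(a+b)+y*a))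
          = P + s*(4+8*b-4*s) + 8*a*i := by
        rw [hs, hP]; ring
      have h1 : 0 ≤ s*(4+8*b-4*s) := by
        apply mul_nonneg hs0; linarith
      nlinarith

end Auxiliary


/-- If `1 ≤ i(T) < (n+3)/3` and
`2Δ^{-mon} + Δ^{+mon} ≤ (n−1−i)(n+1−i)/(4(n−1+i))`, then every vertex lies on a
rainbow triangle. -/
theorem every_vertex_in_rainbow_triangle_of_monochromatic_bound₂
    {V : Type} [Fintype V] (n : ℕ) (hn : Fintype.card V = n)
    (T : Tournament V) (C : V → V → ℕ)
    (hsc : T.StronglyConnected)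
    (hmono : T.maxMonoIn C ≤ T.maxMonoOut C)
    (hirr1 : 1 ≤ T.irreg)
    (hirr2 : (T.irreg : ℚ) < ((n : ℚ) + 3) / 3)
    (hbound : 2 * (T.maxMonoIn C : ℚ) + (T.maxMonoOut C : ℚ)
        ≤ ((n : ℚ) - 1 - (T.irreg : ℚ)) * ((n : ℚ) + 1 - (T.irreg : ℚ))
            / (4 * ((n : ℚ) - 1 + (T.irreg : ℚ)))) :
    ∀ v : V, (T.rainbowTrianglesThrough C v).Nonempty := by
  classical
  intro v
  by_contra hre
  rw [Finset.not_nonempty_iff_eq_empty] at hre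
  -- every triangle through v is non-rainbow
  have hNRt : (T.nonRainbowTrianglesThrough C v).card = (T.trianglesThrough v).card := by
    apply le_antisymm (Finset.card_le_card (Finset.filter_subset _ _))
    apply Finset.card_le_card
    intro p hp
    refine Finset.mem_filter.mpr ⟨hp, fun hcon => ?_⟩
    have hmem : p ∈ T.rainbowTrianglesThrough C v := Finset.mem_filter.mpr ⟨hp, hcon⟩
    rw [hre] at hmem
    exact absurd hmem (Finset.notMem_empty p)
  -- an arc exists
  obtain ⟨u0, w0, harc0⟩ : ∃ u w : V, (T.arc u w : Prop) := by
    by_contra hno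
    push_neg at hno
    have hz : ∀ w : V, T.outDeg w = 0 ∧ T.inDeg w = 0 := by
      intro w
      constructor
      · rw [Tournament.outDeg, Finset.card_eq_zero, Finset.filter_eq_empty_iff]
        exact fun u _ => hno w u
      · rw [Tournament.inDeg, Finset.card_eq_zero, Finset.filter_eq_empty_iff]
        exact fun u _ => hno u w
    have hzero : T.irreg = 0 := by
      rw [Tournament.irreg]
      refine Nat.eq_zero_of_le_zero (Finset.sup_le fun w _ => ?_)
      rw [(hz w).1, (hz w).2]
      simp
    omega
  have hn2 : 2 ≤ n := by
    rw [← hn]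
    exact Fintype.one_lt_card_iff_nontrivial.mpr ⟨⟨u0, w0, T.ne_of_arc' harc0⟩⟩
  -- maxMonoIn ≥ 1
  have ha1 : 1 ≤ T.maxMonoIn C := by
    refine le_trans ?_ (T.monoInDeg_le C w0 (C u0 w0))
    rw [Tournament.monoInDeg]
    refine Finset.card_pos.mpr ⟨u0, ?_⟩
    rw [Finset.mem_filter]
    exact ⟨Finset.mem_univ _, harc0, rfl⟩
  -- basic cast abbreviations
  have hdeg : ∀ w : V, (T.outDeg w : ℚ) + (T.inDeg w : ℚ) = (n : ℚ) - 1 := by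
    intro w
    have h := T.deg_sum w
    rw [hn] at h
    have h2 := congrArg (fun k : ℕ => (k : ℚ)) h
    push_cast at h2
    linarith
  have habs : ∀ w : V, (T.outDeg w : ℚ) - (T.inDeg w : ℚ) ≤ (T.irreg : ℚ)
      ∧ -(T.irreg : ℚ) ≤ (T.outDeg w : ℚ) - (T.inDeg w : ℚ) := by
    intro w
    have h : ((T.outDeg w : ℤ) - (T.inDeg w : ℤ)).natAbs ≤ T.irreg :=
      Finset.le_sup (f := fun v => ((T.outDeg v : ℤ) - (T.inDeg v : ℤ)).natAbs) (Finset.mem_univ w)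
    have h2 : |(T.outDeg w : ℤ) - (T.inDeg w : ℤ)| ≤ (T.irreg : ℤ) := by
      rw [Int.abs_eq_natAbs]; exact_mod_cast h
    rw [abs_le] at h2
    constructor
    · exact_mod_cast h2.2
    · exact_mod_cast h2.1
  have hdeglow : ∀ w : V, (n : ℚ) - 1 - (T.irreg : ℚ) ≤ 2 * (T.outDeg w : ℚ) := by
    intro w
    have h1 := hdeg w
    have h2 := (habs w).2
    linarith
  have hdeglow' : ∀ w : V, (n : ℚ) - 1 - (T.irreg : ℚ) ≤ 2 * (T.inDeg w : ℚ) := by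
    intro w
    have h1 := hdeg w
    have h2 := (habs w).1
    linarith
  -- triangle count lower bounds
  have ht1 : (T.outDeg v : ℚ) * (((n:ℚ)-1) + 1 - (T.irreg : ℚ) - (T.outDeg v : ℚ))
      ≤ 2 * ((T.trianglesThrough v).card : ℚ) := by
    have hq : 2 * ((T.trianglesThrough v).card : ℚ) + (T.outDeg v : ℚ) * (T.outDeg v : ℚ)
        = 2 * (∑ w ∈ Finset.univ.filter (fun w => (T.arc v w : Prop)), (T.outDeg w : ℚ))
          + (T.outDeg v : ℚ) := by
      exact_mod_cast T.out_count v
    have hlow : (T.outDeg v : ℚ) * ((n:ℚ) - 1 - (T.irreg : ℚ))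
        ≤ 2 * (∑ w ∈ Finset.univ.filter (fun w => (T.arc v w : Prop)), (T.outDeg w : ℚ)) := by
      have hsum := Finset.sum_le_sum (s := Finset.univ.filter (fun w => (T.arc v w : Prop)))
          (f := fun _ => ((n:ℚ) - 1 - (T.irreg : ℚ))) (g := fun w => 2 * (T.outDeg w : ℚ))
          (fun w _ => hdeglow w)
      rw [Finset.sum_const, nsmul_eq_mul, ← Finset.mul_sum] at hsum
      have hcard : (((Finset.univ.filter (fun w => (T.arc v w : Prop))).card : ℕ) : ℚ)
          = (T.outDeg v : ℚ) := rfl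
      rw [hcard] at hsum
      linarith
    nlinarith [hq, hlow]
  have ht2 : (T.inDeg v : ℚ) * (((n:ℚ)-1) + 1 - (T.irreg : ℚ) - (T.inDeg v : ℚ))
      ≤ 2 * ((T.trianglesThrough v).card : ℚ) := by
    have hq : 2 * ((T.trianglesThrough v).card : ℚ) + (T.inDeg v : ℚ) * (T.inDeg v : ℚ)
        = 2 * (∑ u ∈ Finset.univ.filter (fun u => (T.arc u v : Prop)), (T.inDeg u : ℚ))
          + (T.inDeg v : ℚ) := by
      exact_mod_cast T.in_count v
    have hlow : (T.inDeg v : ℚ) * ((n:ℚ) - 1 - (T.irreg : ℚ))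
        ≤ 2 * (∑ u ∈ Finset.univ.filter (fun u => (T.arc u v : Prop)), (T.inDeg u : ℚ)) := by
      have hsum := Finset.sum_le_sum (s := Finset.univ.filter (fun u => (T.arc u v : Prop)))
          (f := fun _ => ((n:ℚ) - 1 - (T.irreg : ℚ))) (g := fun u => 2 * (T.inDeg u : ℚ))
          (fun u _ => hdeglow' u)
      rw [Finset.sum_const, nsmul_eq_mul, ← Finset.mul_sum] at hsum
      have hcard : (((Finset.univ.filter (fun u => (T.arc u v : Prop))).card : ℕ) : ℚ)
          = (T.inDeg v : ℚ) := rfl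
      rw [hcard] at hsum
      linarith
    nlinarith [hq, hlow]
  -- non-rainbow bound, cast
  have hNRq : ((T.trianglesThrough v).card : ℚ)
      ≤ (T.outDeg v : ℚ) * (T.maxMonoOut C : ℚ) + (T.inDeg v : ℚ) * (T.maxMonoIn C : ℚ)
        + (T.outDeg v : ℚ) * (T.maxMonoIn C : ℚ) := by
    have h := T.nr_bound C v
    rw [hNRt] at h
    exact_mod_cast h
  -- hypotheses for the arithmetic lemma
  have h4pos : (0:ℚ) < 4 * ((n:ℚ) - 1 + (T.irreg : ℚ)) := by
    have : (1:ℚ) ≤ (T.irreg : ℚ) := by exact_mod_cast hirr1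
    have : (2:ℚ) ≤ (n:ℚ) := by exact_mod_cast hn2
    linarith
  have hK : 4 * (((n:ℚ)-1) + (T.irreg : ℚ)) * (2 * (T.maxMonoIn C : ℚ) + (T.maxMonoOut C : ℚ))
      ≤ (((n:ℚ)-1) - (T.irreg : ℚ)) * (((n:ℚ)-1) + 2 - (T.irreg : ℚ)) := by
    have h' := (le_div_iff₀ h4pos).mp hbound
    calc 4 * (((n:ℚ)-1) + (T.irreg : ℚ)) * (2 * (T.maxMonoIn C : ℚ) + (T.maxMonoOut C : ℚ))
        = (2 * (T.maxMonoIn C : ℚ) + (T.maxMonoOut C : ℚ)) * (4 * ((n:ℚ) - 1 + (T.irreg : ℚ))) := by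
          ring
      _ ≤ ((n : ℚ) - 1 - (T.irreg : ℚ)) * ((n : ℚ) + 1 - (T.irreg : ℚ)) := h'
      _ = (((n:ℚ)-1) - (T.irreg : ℚ)) * (((n:ℚ)-1) + 2 - (T.irreg : ℚ)) := by ring
  have hfin := arith_key ((n:ℚ)-1) (T.irreg : ℚ) (T.outDeg v : ℚ) (T.inDeg v : ℚ)
      (T.maxMonoIn C : ℚ) (T.maxMonoOut C : ℚ)
      ((T.trianglesThrough v).card : ℚ) ((T.trianglesThrough v).card : ℚ)
      (by exact_mod_cast hirr1)
      (by have : (T.irreg : ℚ) < ((n:ℚ)+3)/3 := hirr2; linarith)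
      (by
        have h2n : (2:ℚ) ≤ (n:ℚ) := by exact_mod_cast hn2
        linarith)
      (hdeg v) (hdeglow v) (hdeglow' v)
      (by exact_mod_cast ha1) (by exact_mod_cast hmono)
      hK ht1 ht2 hNRq
  exact lt_irrefl _ hfin
end

section
/- Let T_n be a strongly connected tournament of order n and irregularity i(T_n). Then for each vertex v of T_n, the number of directed triangles containing v is at least δ(v)·(n − δ(v) − i(T_n))/2. -/
open Finset

namespace Tournament

variable {V : Type} [Fintype V]

lemma out_add_in (T : Tournament V) (w : V) :
    T.outDeg w + T.inDeg w + 1 = Fintype.card V := by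
  classical
  have h1 : T.outDeg w = ∑ u : V, (if T.arc w u then 1 else 0) :=
    Finset.card_filter _ _
  have h2 : T.inDeg w = ∑ u : V, (if T.arc u w then 1 else 0) :=
    Finset.card_filter _ _
  have h3 : ∑ u : V, (if u = w then 1 else 0) = 1 := by simp
  have key : ∀ u : V, ((if T.arc w u then 1 else 0) + (if T.arc u w then 1 else 0))
      + (if u = w then 1 else 0) = 1 := by
    intro u
    by_cases h : u = w
    · simp [h, T.irrefl]
    · have h1 := T.oneArc w u (Ne.symm h)
      cases hb : T.arc u w <;> simp [h1, hb, h]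
  have h4 : ∑ u : V, (((if T.arc w u then 1 else 0) + (if T.arc u w then 1 else 0))
      + (if u = w then 1 else 0)) = Fintype.card V := by
    rw [Finset.sum_congr rfl fun u _ => key u]
    simp
  rw [Finset.sum_add_distrib, Finset.sum_add_distrib, h3] at h4
  rw [h1, h2]
  omega

lemma two_outDeg_ge (T : Tournament V) (w : V) :
    (Fintype.card V : ℤ) - 1 - T.irreg ≤ 2 * T.outDeg w := by
  have h1 := T.out_add_in w
  have h2 : ((T.outDeg w : ℤ) - T.inDeg w).natAbs ≤ T.irreg :=
    Finset.le_sup (f := fun u => ((T.outDeg u : ℤ) - T.inDeg u).natAbs) (Finset.mem_univ w)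
  omega

lemma tri_card (T : Tournament V) (v : V) :
    (T.trianglesThrough v).card =
      ∑ w ∈ univ.filter (fun w => T.arc v w),
        ∑ u ∈ univ.filter (fun u => T.arc u v), (if T.arc w u then 1 else 0) := by
  classical
  rw [trianglesThrough, Finset.card_filter, ← Finset.univ_product_univ, Finset.sum_product]
  rw [Finset.sum_filter]
  refine Finset.sum_congr rfl fun w _ => ?_
  rw [Finset.sum_filter]
  by_cases h : T.arc v w
  · simp only [h, if_true]
    refine Finset.sum_congr rfl fun u _ => ?_
    by_cases h1 : T.arc u v <;> by_cases h2 : T.arc w u <;> simp [h, h1, h2]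
  · simp [h]

lemma outDeg_split (T : Tournament V) (v w : V) (hw : T.arc v w) :
    T.outDeg w = (∑ u ∈ univ.filter (fun u => T.arc v u), (if T.arc w u then 1 else 0))
               + (∑ u ∈ univ.filter (fun u => T.arc u v), (if T.arc w u then 1 else 0)) := by
  have hvw : v ≠ w := by
    intro h; rw [h] at hw; simp [T.irrefl w] at hw
  have hwv : T.arc w v = false := by
    have h2 := T.oneArc v w hvw
    rw [hw] at h2
    cases hb : T.arc w v
    · rfl
    · rw [hb] at h2; simp at h2
  rw [outDeg, Finset.card_filter, Finset.sum_filter, Finset.sum_filter,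
    ← Finset.sum_add_distrib]
  refine Finset.sum_congr rfl fun u _ => ?_
  by_cases huv : u = v
  · simp [huv, T.irrefl, hwv]
  · have h1 := T.oneArc v u (Ne.symm huv)
    cases hb : T.arc u v <;> simp [h1, hb]

lemma double_count (T : Tournament V) (O : Finset V) :
    2 * (∑ w ∈ O, ∑ u ∈ O, (if T.arc w u then 1 else 0)) + O.card = O.card * O.card := by
  classical
  have hswap : (∑ w ∈ O, ∑ u ∈ O, (if T.arc w u then (1:ℕ) else 0))
      = ∑ w ∈ O, ∑ u ∈ O, (if T.arc u w then (1:ℕ) else 0) := Finset.sum_comm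
  have step : ∀ w ∈ O,
      ((∑ u ∈ O, (if T.arc w u then (1:ℕ) else 0))
      + (∑ u ∈ O, (if T.arc u w then (1:ℕ) else 0)))
      + (∑ u ∈ O, (if u = w then (1:ℕ) else 0)) = O.card := by
    intro w hw
    have hterm : ∀ u ∈ O, (((if T.arc w u then (1:ℕ) else 0) + (if T.arc u w then 1 else 0))
        + (if u = w then 1 else 0)) = 1 := by
      intro u _
      by_cases h : u = w
      · simp [h, T.irrefl]
      · have h1 := T.oneArc w u (Ne.symm h)
        cases hb : T.arc u w <;> simp [h1, hb, h]
    have h4 : ∑ u ∈ O, (((if T.arc w u then (1:ℕ) else 0) + (if T.arc u w then 1 else 0))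
        + (if u = w then 1 else 0)) = O.card := by
      rw [Finset.sum_congr rfl hterm]
      simp
    rw [Finset.sum_add_distrib, Finset.sum_add_distrib] at h4
    exact h4
  have h5 := Finset.sum_congr rfl step
  rw [Finset.sum_add_distrib, Finset.sum_add_distrib, ← hswap] at h5
  have h6 : ∑ w ∈ O, ∑ u ∈ O, (if u = w then (1:ℕ) else 0) = O.card := by
    have hx : ∀ w ∈ O, ∑ u ∈ O, (if u = w then (1:ℕ) else 0) = 1 := by
      intro w hw
      rw [Finset.sum_ite_eq' O w (fun _ => 1)]
      simp [hw]
    rw [Finset.sum_congr rfl hx]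
    simp
  rw [h6, Finset.sum_const, smul_eq_mul] at h5
  have := h5
  nlinarith [h5]

lemma key (T : Tournament V) (v : V) :
    (T.outDeg v : ℤ) * ((Fintype.card V : ℤ) - T.irreg - T.outDeg v)
      ≤ 2 * ((T.trianglesThrough v).card : ℤ) := by
  classical
  set O := univ.filter (fun w => T.arc v w) with hO
  set I := univ.filter (fun u => T.arc u v) with hI
  have hOcard : O.card = T.outDeg v := rfl
  have ht := T.tri_card v
  have hsum : ∑ w ∈ O, T.outDeg w
      = (∑ w ∈ O, ∑ u ∈ O, if T.arc w u then 1 else 0)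
      + (∑ w ∈ O, ∑ u ∈ I, if T.arc w u then 1 else 0) := by
    rw [← Finset.sum_add_distrib]
    refine Finset.sum_congr rfl fun w hw => ?_
    refine T.outDeg_split v w ?_
    simpa [hO] using hw
  have hdc := T.double_count O
  have hlow : (O.card : ℤ) * ((Fintype.card V : ℤ) - 1 - T.irreg)
      ≤ ∑ w ∈ O, (2 * (T.outDeg w : ℤ)) := by
    calc (O.card : ℤ) * ((Fintype.card V : ℤ) - 1 - T.irreg)
        = ∑ _w ∈ O, ((Fintype.card V : ℤ) - 1 - T.irreg) := by
          rw [Finset.sum_const, nsmul_eq_mul]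
      _ ≤ _ := Finset.sum_le_sum fun w _ => T.two_outDeg_ge w
  -- cast everything to ℤ and combine
  have hlow2 : (O.card : ℤ) * ((Fintype.card V : ℤ) - 1 - T.irreg)
      ≤ 2 * ((∑ w ∈ O, T.outDeg w : ℕ) : ℤ) := by
    refine hlow.trans (le_of_eq ?_)
    push_cast
    rw [Finset.mul_sum]
  have h1 : ((∑ w ∈ O, T.outDeg w : ℕ) : ℤ)
      = ((∑ w ∈ O, ∑ u ∈ O, if T.arc w u then (1:ℕ) else 0 : ℕ) : ℤ)
      + ((∑ w ∈ O, ∑ u ∈ I, if T.arc w u then (1:ℕ) else 0 : ℕ) : ℤ) := by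
    exact_mod_cast congrArg (Nat.cast : ℕ → ℤ) hsum
  have h2 : 2 * ((∑ w ∈ O, ∑ u ∈ O, if T.arc w u then (1:ℕ) else 0 : ℕ) : ℤ) + (O.card : ℤ)
      = (O.card : ℤ) * O.card := by exact_mod_cast hdc
  have h3 : ((T.trianglesThrough v).card : ℤ)
      = ((∑ w ∈ O, ∑ u ∈ I, if T.arc w u then (1:ℕ) else 0 : ℕ) : ℤ) := by
    exact_mod_cast ht
  rw [← hOcard]
  nlinarith [hlow2, h1, h2, h3]

def rev (T : Tournament V) : Tournament V where
  arc u w := T.arc w u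
  irrefl v := T.irrefl v
  oneArc u w h := T.oneArc w u h.symm

lemma rev_outDeg (T : Tournament V) (w : V) : (T.rev).outDeg w = T.inDeg w := rfl

lemma rev_irreg (T : Tournament V) : (T.rev).irreg = T.irreg := by
  unfold irreg
  refine Finset.sup_congr rfl fun w _ => ?_
  show ((T.inDeg w : ℤ) - T.outDeg w).natAbs = ((T.outDeg w : ℤ) - T.inDeg w).natAbs
  omega

lemma rev_triangles (T : Tournament V) (v : V) :
    ((T.rev).trianglesThrough v).card = (T.trianglesThrough v).card := by
  have hmap : (T.rev).trianglesThrough v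
      = (T.trianglesThrough v).map ⟨Prod.swap, Prod.swap_injective⟩ := by
    ext p
    simp only [trianglesThrough, Finset.mem_map, Finset.mem_filter, Finset.mem_univ,
      true_and, Function.Embedding.coeFn_mk]
    constructor
    · rintro ⟨h1, h2, h3⟩
      exact ⟨(p.2, p.1), ⟨h3, h2, h1⟩, rfl⟩
    · rintro ⟨q, ⟨h1, h2, h3⟩, rfl⟩
      exact ⟨h3, h2, h1⟩
  rw [hmap, Finset.card_map]

lemma key' (T : Tournament V) (v : V) :
    (T.inDeg v : ℤ) * ((Fintype.card V : ℤ) - T.irreg - T.inDeg v)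
      ≤ 2 * ((T.trianglesThrough v).card : ℤ) := by
  have h := (T.rev).key v
  rwa [rev_outDeg, rev_irreg, rev_triangles] at h

end Tournament

/-- Lemma 1: In a strongly connected tournament of order `n`, every
vertex `v` lies on at least `δ(v)(n − δ(v) − i(T))/2` directed triangles. -/
theorem triangles_through_vertex_lower_bound
    {V : Type} [Fintype V] (n : ℕ) (hn : Fintype.card V = n)
    (T : Tournament V)
    (hsc : T.StronglyConnected)
    (v : V) :
    ((T.trianglesThrough v).card : ℚ) ≥
      (T.minDeg v : ℚ) * ((n : ℚ) - (T.minDeg v : ℚ) - (T.irreg : ℚ)) / 2 := by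
  subst hn
  have hkey : (T.minDeg v : ℤ) * ((Fintype.card V : ℤ) - T.irreg - T.minDeg v)
      ≤ 2 * ((T.trianglesThrough v).card : ℤ) := by
    rcases le_total (T.outDeg v) (T.inDeg v) with h | h
    · rw [Tournament.minDeg, min_eq_left h]; exact T.key v
    · rw [Tournament.minDeg, min_eq_right h]; exact T.key' v
  have hQ : (T.minDeg v : ℚ) * ((Fintype.card V : ℚ) - T.irreg - T.minDeg v)
      ≤ 2 * ((T.trianglesThrough v).card : ℚ) := by exact_mod_cast hkey
  rw [ge_iff_le, div_le_iff₀ (by norm_num : (0:ℚ) < 2)]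
  nlinarith [hQ]
end
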